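/- For the massive Gross–Neveu soliton U_ω with ω ∈ (0,1), the L² norm satisfies ∫_ℝ |U_ω(x)|² dx = √(1−ω²)/ω. -/

import Mathlib

open MeasureTheory

/-- The massive Gross–Neveu line soliton profile. -/
noncomputable def grossNeveuSoliton (ω x : ℝ) : ℂ :=
  (↑(Real.sqrt (1 - ω ^ 2)) : ℂ) *
    ((↑(Real.sqrt (1 + ω) * Real.cosh (Real.sqrt (1 - ω ^ 2) * x)) : ℂ)
      - Complex.I * (↑(Real.sqrt (1 - ω) * Real.sinh (Real.sqrt (1 - ω ^ 2) * x)) : ℂ)) /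
    (↑(1 + ω * Real.cosh (2 * Real.sqrt (1 - ω ^ 2) * x)) : ℂ)

/-- L² norm of the Gross–Neveu soliton: ∫ |U_ω|² = √(1−ω²)/ω. -/
theorem grossNeveuSoliton_L2 (ω : ℝ) (hω : ω ∈ Set.Ioo (0 : ℝ) 1) :
    ∫ x : ℝ, ‖grossNeveuSoliton ω x‖ ^ 2 = Real.sqrt (1 - ω ^ 2) / ω := by
  obtain ⟨hω0, hω1⟩ := hω
  set μ := Real.sqrt (1 - ω ^ 2) with hμdef
  have h1ω2 : (0:ℝ) < 1 - ω ^ 2 := by nlinarith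
  have hμpos : 0 < μ := Real.sqrt_pos.mpr h1ω2
  have hμsq : μ ^ 2 = 1 - ω ^ 2 := Real.sq_sqrt h1ω2.le
  -- the antiderivative
  set f : ℝ → ℝ := fun x => μ / 2 * Real.sinh (2 * μ * x) / (1 + ω * Real.cosh (2 * μ * x))
    with hfdef
  set f' : ℝ → ℝ := fun x =>
    μ ^ 2 * (Real.cosh (2 * μ * x) + ω) / (1 + ω * Real.cosh (2 * μ * x)) ^ 2 with hf'def
  have hden : ∀ x : ℝ, (0:ℝ) < 1 + ω * Real.cosh (2 * μ * x) := fun x => by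
    have := Real.one_le_cosh (2 * μ * x)
    nlinarith
  -- Step 1: the integrand equals f'
  have habs : ∀ x : ℝ, ‖grossNeveuSoliton ω x‖ ^ 2 = f' x := by
    intro x
    have hd := hden x
    rw [Complex.sq_norm]
    unfold grossNeveuSoliton
    rw [← hμdef]
    rw [map_div₀, map_mul]
    have hnum : Complex.normSq
        ((↑(Real.sqrt (1 + ω) * Real.cosh (μ * x)) : ℂ)
          - Complex.I * (↑(Real.sqrt (1 - ω) * Real.sinh (μ * x)) : ℂ))
        = Real.cosh (2 * μ * x) + ω := by
      have h1 : (Real.sqrt (1 + ω)) ^ 2 = 1 + ω := Real.sq_sqrt (by linarith)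
      have h2 : (Real.sqrt (1 - ω)) ^ 2 = 1 - ω := Real.sq_sqrt (by linarith)
      have h3 : Real.cosh (2 * μ * x) = Real.cosh (μ * x) ^ 2 + Real.sinh (μ * x) ^ 2 := by
        rw [show 2 * μ * x = 2 * (μ * x) by ring]; exact Real.cosh_two_mul (μ * x)
      have h4 : Real.cosh (μ * x) ^ 2 - Real.sinh (μ * x) ^ 2 = 1 :=
        Real.cosh_sq_sub_sinh_sq (μ * x)
      simp only [Complex.normSq_apply, Complex.sub_re, Complex.sub_im, Complex.ofReal_re,
        Complex.ofReal_im, Complex.mul_re, Complex.mul_im, Complex.I_re, Complex.I_im]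
      linear_combination (Real.cosh (μ * x)) ^ 2 * h1 + (Real.sinh (μ * x)) ^ 2 * h2 - h3 +
        ω * h4
    rw [hnum, Complex.normSq_ofReal, Complex.normSq_ofReal]
    simp only [hf'def]
    ring
  -- Step 2: f has derivative f'
  have hderiv : ∀ x : ℝ, HasDerivAt f (f' x) x := by
    intro x
    have hd := hden x
    have hnum : HasDerivAt (fun x => μ / 2 * Real.sinh (2 * μ * x))
        (μ / 2 * (Real.cosh (2 * μ * x) * (2 * μ))) x := by
      simpa using (((hasDerivAt_id x).const_mul (2 * μ)).sinh).const_mul (μ / 2)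
    have hdenom : HasDerivAt (fun x => 1 + ω * Real.cosh (2 * μ * x))
        (ω * (Real.sinh (2 * μ * x) * (2 * μ))) x := by
      simpa using (((hasDerivAt_id x).const_mul (2 * μ)).cosh.const_mul ω).const_add 1
    have := hnum.div hdenom (ne_of_gt hd)
    refine this.congr_deriv ?_
    symm
    have h4 : Real.cosh (2 * μ * x) ^ 2 - Real.sinh (2 * μ * x) ^ 2 = 1 :=
      Real.cosh_sq_sub_sinh_sq (2 * μ * x)
    simp only [hf'def]
    field_simp
    linear_combination (-ω) * Real.cosh_sq_sub_sinh_sq (μ * 2 * x)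
  -- Step 3: limits of f
  set G : ℝ → ℝ := fun u => μ / 2 * (u ^ 2 - 1) / (2 * u + ω * (u ^ 2 + 1)) with hGdef
  have hG0 : G 0 = -(μ / (2 * ω)) := by
    simp only [hGdef]
    field_simp
    ring
  have hGcont : ContinuousAt G 0 := by
    apply ContinuousAt.div
    · fun_prop
    · fun_prop
    · simp; positivity
  have hfG : ∀ x : ℝ, f x = G (Real.exp (2 * μ * x)) := by
    intro x
    have hd := hden x
    have he : Real.exp (2 * μ * x) > 0 := Real.exp_pos _
    have hs : Real.sinh (2 * μ * x) = (Real.exp (2 * μ * x) - (Real.exp (2 * μ * x))⁻¹) / 2 := by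
      rw [Real.sinh_eq, Real.exp_neg]
    have hc : Real.cosh (2 * μ * x) = (Real.exp (2 * μ * x) + (Real.exp (2 * μ * x))⁻¹) / 2 := by
      rw [Real.cosh_eq, Real.exp_neg]
    have hd2 : (0:ℝ) < 2 * Real.exp (2 * μ * x) + ω * (Real.exp (2 * μ * x) ^ 2 + 1) := by
      positivity
    simp only [hfdef, hGdef]
    rw [hs, hc] at *
    field_simp
  have hfG' : ∀ x : ℝ, f x = -G (Real.exp (-(2 * μ) * x)) := by
    intro x
    have hd := hden x
    have he : Real.exp (-(2 * μ) * x) > 0 := Real.exp_pos _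
    have hrel : Real.exp (-(2 * μ) * x) = (Real.exp (2 * μ * x))⁻¹ := by
      rw [← Real.exp_neg]; ring_nf
    have hs : Real.sinh (2 * μ * x) = (Real.exp (2 * μ * x) - (Real.exp (2 * μ * x))⁻¹) / 2 := by
      rw [Real.sinh_eq, Real.exp_neg]
    have hc : Real.cosh (2 * μ * x) = (Real.exp (2 * μ * x) + (Real.exp (2 * μ * x))⁻¹) / 2 := by
      rw [Real.cosh_eq, Real.exp_neg]
    have hepos : Real.exp (2 * μ * x) > 0 := Real.exp_pos _
    have hd2 : (0:ℝ) < 2 * (Real.exp (2 * μ * x))⁻¹ + ω * (((Real.exp (2 * μ * x))⁻¹) ^ 2 + 1) := by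
      positivity
    simp only [hfdef, hGdef, hrel]
    rw [hs, hc] at *
    field_simp
    ring
  have htop : Filter.Tendsto f Filter.atTop (nhds (μ / (2 * ω))) := by
    have h1 : Filter.Tendsto (fun x : ℝ => Real.exp (-(2 * μ) * x)) Filter.atTop (nhds 0) := by
      apply Real.tendsto_exp_atBot.comp
      exact Filter.Tendsto.const_mul_atTop_of_neg (by linarith : -(2 * μ) < 0)
        Filter.tendsto_id
    have h2 : Filter.Tendsto (fun x : ℝ => -G (Real.exp (-(2 * μ) * x))) Filter.atTop
        (nhds (-G 0)) := ((hGcont.tendsto.comp h1).neg)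
    rw [hG0, neg_neg] at h2
    exact Filter.Tendsto.congr (fun x => (hfG' x).symm) h2
  have hbot : Filter.Tendsto f Filter.atBot (nhds (-(μ / (2 * ω)))) := by
    have h1 : Filter.Tendsto (fun x : ℝ => Real.exp (2 * μ * x)) Filter.atBot (nhds 0) := by
      apply Real.tendsto_exp_atBot.comp
      have : Filter.Tendsto (fun x : ℝ => 2 * μ * x) Filter.atBot Filter.atBot := by
        apply Filter.Tendsto.const_mul_atBot (by linarith : (0:ℝ) < 2 * μ) Filter.tendsto_id
      exact this
    have h2 : Filter.Tendsto (fun x : ℝ => G (Real.exp (2 * μ * x))) Filter.atBot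
        (nhds (G 0)) := hGcont.tendsto.comp h1
    rw [hG0] at h2
    exact Filter.Tendsto.congr (fun x => (hfG x).symm) h2
  -- Step 4: nonnegativity and integrability
  have hpos : ∀ x : ℝ, 0 ≤ f' x := by
    intro x
    have h := Real.one_le_cosh (2 * μ * x)
    apply div_nonneg _ (sq_nonneg _)
    apply mul_nonneg (sq_nonneg _)
    linarith
  have hIoi : IntegrableOn f' (Set.Ioi (0:ℝ)) :=
    integrableOn_Ioi_deriv_of_nonneg' (fun x _ => hderiv x) (fun x _ => hpos x) htop
  have heven : ∀ x : ℝ, f' (-x) = f' x := by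
    intro x
    simp only [hf'def]
    rw [show 2 * μ * -x = -(2 * μ * x) by ring, Real.cosh_neg]
  have hIic : IntegrableOn f' (Set.Iic (0:ℝ)) := by
    rw [← Measure.map_neg_eq_self (volume : Measure ℝ)]
    have m : MeasurableEmbedding fun x : ℝ => -x := (Homeomorph.neg ℝ).measurableEmbedding
    rw [m.integrableOn_map_iff]
    have : (f' ∘ fun x : ℝ => -x) = f' := funext fun x => heven x
    rw [this]
    simp only [Set.neg_preimage, Set.neg_Iic, neg_zero]
    exact Iff.mpr integrableOn_Ici_iff_integrableOn_Ioi hIoi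
  have hint : Integrable f' := by
    have h := hIic.union hIoi
    rwa [Set.Iic_union_Ioi, integrableOn_univ] at h
  -- conclusion
  have key : ∫ x : ℝ, f' x = μ / (2 * ω) - -(μ / (2 * ω)) :=
    integral_of_hasDerivAt_of_tendsto hderiv hint hbot htop
  calc ∫ x : ℝ, ‖grossNeveuSoliton ω x‖ ^ 2 = ∫ x : ℝ, f' x := by
        congr 1; funext x; exact habs x
    _ = μ / (2 * ω) - -(μ / (2 * ω)) := key
    _ = μ / ω := by field_simp; ring
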